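/- Let p ≥ 0, q > 0, u^A, u^B > 0 with q·u^B − p > u^A. Let B be uniformly distributed on [p/q, (u^A + p)/q]. Then for every pure bid x^A ≥ 0 of Player A, the expected payoff u^A·P(B < (x^A + p)/q) + α·u^A·P(B = (x^A + p)/q) − x^A is at most 0; in particular Player A's best achievable payoff against this distribution is 0. -/

import Mathlib

open MeasureTheory ProbabilityTheory
open scoped ProbabilityTheory

private lemma lip_aux {A C : ℝ} (h : C ≤ A) :
    min (max A 0) 1 - min (max C 0) 1 ≤ A - C := by
  simp only [min_def, max_def]
  split_ifs <;> linarith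

private lemma key {Ω : Type*} [MeasureSpace Ω] [IsProbabilityMeasure (ℙ : Measure Ω)]
    (uA p q : ℝ) (huA : 0 < uA) (hq : 0 < q)
    (B : Ω → ℝ) (hBmeas : Measurable B)
    (hBcdf : ∀ x : ℝ, ℙ {ω | B ω ≤ x} = ENNReal.ofReal
      (min (max ((q * x - p) / uA) 0) 1)) (y : ℝ) :
    (ℙ {ω | B ω < y}).toReal = min (max ((q * y - p) / uA) 0) 1 ∧
    (ℙ {ω | B ω = y}).toReal = 0 := by
  set f : ℝ → ℝ := fun x => min (max ((q * x - p) / uA) 0) 1 with hf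
  have hf0 : ∀ x, 0 ≤ f x := fun x => le_min (le_max_right _ _) zero_le_one
  have hlip : ∀ ε : ℝ, 0 < ε → f y - f (y - ε) ≤ q * ε / uA := by
    intro ε hε
    have h1 : (q * (y - ε) - p) / uA ≤ (q * y - p) / uA := by
      gcongr
      nlinarith
    have := lip_aux h1
    have heq : (q * y - p) / uA - (q * (y - ε) - p) / uA = q * ε / uA := by ring
    simp only [hf]
    linarith [this, heq.le]
  -- measures
  have hmlt : MeasurableSet {ω | B ω < y} := hBmeas measurableSet_Iio
  have hmeq : MeasurableSet {ω | B ω = y} := hBmeas (measurableSet_singleton y)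
  have hne : ∀ s : Set Ω, ℙ s ≠ ⊤ := fun s => measure_ne_top _ _
  have key1 : ∀ ε : ℝ, 0 < ε →
      f (y - ε) ≤ (ℙ {ω | B ω < y}).toReal ∧
      (ℙ {ω | B ω = y}).toReal + f (y - ε) ≤ f y := by
    intro ε hε
    have hsub1 : {ω | B ω ≤ y - ε} ⊆ {ω | B ω < y} := fun ω h => by
      simp only [Set.mem_setOf_eq] at *; linarith
    have h1 : ℙ {ω | B ω ≤ y - ε} ≤ ℙ {ω | B ω < y} := measure_mono hsub1
    have hd : Disjoint {ω | B ω = y} {ω | B ω ≤ y - ε} := by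
      rw [Set.disjoint_left]
      intro ω h1 h2
      simp only [Set.mem_setOf_eq] at *
      linarith
    have hu : ℙ {ω | B ω = y} + ℙ {ω | B ω ≤ y - ε} ≤ ℙ {ω | B ω ≤ y} := by
      rw [← measure_union hd (hBmeas measurableSet_Iic)]
      apply measure_mono
      intro ω h
      rcases h with h | h <;> simp only [Set.mem_setOf_eq] at * <;> linarith
    simp only [hBcdf] at h1 hu
    constructor
    · have := ENNReal.toReal_mono (hne _) h1
      rwa [ENNReal.toReal_ofReal (hf0 (y - ε))] at this
    · have := ENNReal.toReal_mono ENNReal.ofReal_ne_top hu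
      rwa [ENNReal.toReal_add (hne _) ENNReal.ofReal_ne_top,
        ENNReal.toReal_ofReal (hf0 (y - ε)), ENNReal.toReal_ofReal (hf0 y)] at this
  have hle : (ℙ {ω | B ω < y}).toReal ≤ f y := by
    have h2 : ℙ {ω | B ω < y} ≤ ℙ {ω | B ω ≤ y} := by
      apply measure_mono; intro ω h
      simp only [Set.mem_setOf_eq] at *; linarith
    rw [hBcdf] at h2
    have := ENNReal.toReal_mono ENNReal.ofReal_ne_top h2
    rwa [ENNReal.toReal_ofReal (hf0 y)] at this
  have heps : ∀ δ : ℝ, 0 < δ →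
      f y ≤ (ℙ {ω | B ω < y}).toReal + δ ∧ (ℙ {ω | B ω = y}).toReal ≤ 0 + δ := by
    intro δ hδ
    have hε : 0 < δ * uA / q := by positivity
    obtain ⟨ha, hb⟩ := key1 _ hε
    have hlipε := hlip _ hε
    have : q * (δ * uA / q) / uA = δ := by field_simp
    rw [this] at hlipε
    constructor <;> linarith
  constructor
  · refine le_antisymm hle (le_of_forall_pos_le_add fun δ hδ => (heps δ hδ).1)
  · refine le_antisymm (le_of_forall_pos_le_add fun δ hδ => by
      simpa using (heps δ hδ).2) ENNReal.toReal_nonneg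

theorem stmt_5 {Ω : Type*} [MeasureSpace Ω] [IsProbabilityMeasure (ℙ : Measure Ω)]
    (uA uB p q α : ℝ) (huA : 0 < uA) (huB : 0 < uB) (hq : 0 < q)
    (hα0 : 0 ≤ α) (hα1 : α ≤ 1) (hp : 0 ≤ p)
    (hcase : uA < q * uB - p)
    (B : Ω → ℝ) (hBmeas : Measurable B)
    (hBcdf : ∀ x : ℝ, ℙ {ω | B ω ≤ x} = ENNReal.ofReal
      (min (max ((q * x - p) / uA) 0) 1)) :
    (∀ xA : ℝ, 0 ≤ xA →
      uA * (ℙ {ω | B ω < (xA + p) / q}).toReal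
        + α * uA * (ℙ {ω | B ω = (xA + p) / q}).toReal - xA ≤ 0) ∧
    uA * (ℙ {ω | B ω < (0 + p) / q}).toReal
      + α * uA * (ℙ {ω | B ω = (0 + p) / q}).toReal - 0 = 0 := by
  have main : ∀ xA : ℝ, 0 ≤ xA →
      (ℙ {ω | B ω < (xA + p) / q}).toReal = min (xA / uA) 1 ∧
      (ℙ {ω | B ω = (xA + p) / q}).toReal = 0 := by
    intro xA hxA
    obtain ⟨h1, h2⟩ := key uA p q huA hq B hBmeas hBcdf ((xA + p) / q)
    have harg : q * ((xA + p) / q) - p = xA := by field_simp; ring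
    rw [harg, max_eq_left (by positivity)] at h1
    exact ⟨h1, h2⟩
  constructor
  · intro xA hxA
    obtain ⟨h1, h2⟩ := main xA hxA
    rw [h1, h2]
    have hm : min (xA / uA) 1 ≤ xA / uA := min_le_left _ _
    have : uA * min (xA / uA) 1 ≤ uA * (xA / uA) :=
      mul_le_mul_of_nonneg_left hm huA.le
    rw [mul_div_cancel₀ _ huA.ne'] at this
    linarith
  · obtain ⟨h1, h2⟩ := main 0 le_rfl
    rw [h1, h2]
    simp
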